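/- Let Ω ⊂ ℂⁿ be a nonempty bounded open circled set, let d ≥ 0, let I be the set of multi-indices of length d, and let E = (E_{μν})_{μ,ν ∈ I} be a Hermitian matrix of complex numbers. Suppose that for every nonzero homogeneous polynomial h of degree d, Re ∫_Ω ∫_Ω Σ_{μ,ν ∈ I} E_{μν} z^μ conj(ζ)^ν · h(ζ) · conj(h(z)) dV(ζ) dV(z) > 0. Then E is positive definite: Σ_{μ,ν ∈ I} E_{μν} w_μ conj(w_ν) > 0 for every nonzero w ∈ ℂ^I. -/

import Mathlib

open MeasureTheory MvPolynomial Finset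

namespace PosDefAux

variable {n : ℕ} {Ω : Set (Fin n → ℂ)}

lemma integrableOn_of_continuous (hΩbdd : Bornology.IsBounded Ω)
    {E : Type*} [NormedAddCommGroup E] {f : (Fin n → ℂ) → E} (hf : Continuous f) :
    IntegrableOn f Ω volume :=
  ((hf.continuousOn).integrableOn_compact hΩbdd.isCompact_closure).mono_set subset_closure

lemma continuous_mono (μ : Fin n → ℕ) : Continuous fun z : Fin n → ℂ => ∏ i, z i ^ μ i :=
  continuous_finset_prod _ fun i _ => (continuous_apply i).pow _

lemma pos_integral (hΩopen : IsOpen Ω) (hΩbdd : Bornology.IsBounded Ω)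
    {f : (Fin n → ℂ) → ℂ} (hf : Continuous f) {z₀ : Fin n → ℂ}
    (hz₀ : z₀ ∈ Ω) (hfz₀ : f z₀ ≠ 0) :
    0 < (∫ z in Ω, f z * (starRingEnd ℂ) (f z)).re := by
  have h1 : ∫ z in Ω, f z * (starRingEnd ℂ) (f z)
      = ((∫ z in Ω, Complex.normSq (f z) : ℝ) : ℂ) := by
    simp_rw [Complex.mul_conj]
    exact integral_ofReal
  rw [h1, Complex.ofReal_re]
  rw [setIntegral_pos_iff_support_of_nonneg_ae
    (Filter.Eventually.of_forall fun x => Complex.normSq_nonneg _)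
    (integrableOn_of_continuous hΩbdd (Complex.continuous_normSq.comp hf))]
  refine lt_of_lt_of_le
    ((hΩopen.inter (isOpen_compl_singleton.preimage hf)).measure_pos volume
      ⟨z₀, hz₀, hfz₀⟩) (measure_mono ?_)
  rintro z ⟨hzΩ, hz⟩
  refine ⟨fun h0 => hz (Complex.normSq_eq_zero.mp h0), hzΩ⟩

lemma exists_ne_zero (hΩopen : IsOpen Ω) (hΩne : Ω.Nonempty)
    {p : MvPolynomial (Fin n) ℂ} (hp : p ≠ 0) : ∃ z ∈ Ω, eval z p ≠ 0 := by
  by_contra hc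
  push_neg at hc
  obtain ⟨z₀, hz₀⟩ := hΩne
  have han : AnalyticOnNhd ℂ (fun z => eval z p) Set.univ :=
    AnalyticOnNhd.eval_mvPolynomial p
  have hev : (fun z => eval z p) =ᶠ[nhds z₀] 0 := by
    filter_upwards [hΩopen.mem_nhds hz₀] with z hz using hc z hz
  have hz := han.eqOn_zero_of_preconnected_of_eventuallyEq_zero isPreconnected_univ
    (Set.mem_univ z₀) hev
  exact hp (MvPolynomial.funext fun x => by simpa using hz (Set.mem_univ x))

lemma integral_sum_mul {α : Type*} (hΩbdd : Bornology.IsBounded Ω) (s : Finset α)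
    (c : α → ℂ) (F : α → (Fin n → ℂ) → ℂ) (hF : ∀ a, Continuous (F a)) :
    ∫ z in Ω, ∑ a ∈ s, c a * F a z = ∑ a ∈ s, c a * ∫ z in Ω, F a z := by
  rw [integral_finset_sum s (f := fun a z => c a * F a z) (fun a _ =>
    integrableOn_of_continuous hΩbdd (continuous_const.mul (hF a)))]
  exact Finset.sum_congr rfl fun a _ => integral_const_mul _ _

lemma integral_double_sum_mul {α β : Type*} (hΩbdd : Bornology.IsBounded Ω)
    (s : Finset α) (t : Finset β) (c : α → β → ℂ) (F : α → β → (Fin n → ℂ) → ℂ)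
    (hF : ∀ a b, Continuous (F a b)) :
    ∫ z in Ω, ∑ a ∈ s, ∑ b ∈ t, c a b * F a b z
      = ∑ a ∈ s, ∑ b ∈ t, c a b * ∫ z in Ω, F a b z := by
  rw [integral_finset_sum s (fun a _ => ?_)]
  · exact Finset.sum_congr rfl fun a _ => integral_sum_mul hΩbdd t (c a) (F a) (hF a)
  · exact integrableOn_of_continuous hΩbdd
      (continuous_finset_sum _ fun b _ => continuous_const.mul (hF a b))

end PosDefAux

open PosDefAux

/-- If the integral operator on `V_d` with kernel `Σ E_{μν} z^μ conj(ζ)^ν` is positive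
definite on a nonempty bounded circled open set `Ω`, then the Hermitian matrix `E` is
positive definite. -/
theorem posdef_operator_implies_posdef_matrix
    {n : ℕ} (Ω : Set (Fin n → ℂ))
    (hΩopen : IsOpen Ω) (hΩne : Ω.Nonempty) (hΩbdd : Bornology.IsBounded Ω)
    (hΩcircled : ∀ θ : ℝ, ∀ z ∈ Ω, (fun i => Complex.exp (θ * Complex.I) * z i) ∈ Ω)
    (d : ℕ) (E : (Fin n → ℕ) → (Fin n → ℕ) → ℂ)
    (hHerm : ∀ μ ∈ Finset.Nat.antidiagonalTuple n d, ∀ ν ∈ Finset.Nat.antidiagonalTuple n d,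
      E ν μ = (starRingEnd ℂ) (E μ ν))
    (hPos : ∀ h : MvPolynomial (Fin n) ℂ, h.IsHomogeneous d → h ≠ 0 →
      0 < (∫ z in Ω, ∫ ζ in Ω,
        (∑ μ ∈ Finset.Nat.antidiagonalTuple n d, ∑ ν ∈ Finset.Nat.antidiagonalTuple n d,
          E μ ν * (∏ i, z i ^ μ i) * (starRingEnd ℂ) (∏ i, ζ i ^ ν i))
          * eval ζ h * (starRingEnd ℂ) (eval z h)).re) :
    ∀ w : (Fin n → ℕ) → ℂ, (∃ μ ∈ Finset.Nat.antidiagonalTuple n d, w μ ≠ 0) →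
      0 < (∑ μ ∈ Finset.Nat.antidiagonalTuple n d, ∑ ν ∈ Finset.Nat.antidiagonalTuple n d,
        E μ ν * w μ * (starRingEnd ℂ) (w ν)).re := by
  classical
  intro w hw
  obtain ⟨μ₀, hμ₀I, hμ₀⟩ := hw
  set I : Finset (Fin n → ℕ) := Finset.Nat.antidiagonalTuple n d with hIdef
  -- monomial functions
  set mo : (Fin n → ℕ) → (Fin n → ℂ) → ℂ := fun μ z => ∏ i, z i ^ μ i with hmo
  have hmocont : ∀ μ, Continuous (mo μ) := fun μ => continuous_mono μ
  -- the Gram matrix of the monomials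
  set M : Matrix I I ℂ :=
    fun μ ν => ∫ z in Ω, mo μ.1 z * (starRingEnd ℂ) (mo ν.1 z) with hMdef
  -- polynomials with coefficients c
  set P : (I → ℂ) → MvPolynomial (Fin n) ℂ :=
    fun c => ∑ μ : I, monomial (Finsupp.equivFunOnFinite.symm μ.1) (c μ) with hPdef
  have hevalP : ∀ c z, eval z (P c) = ∑ μ : I, c μ * mo μ.1 z := by
    intro c z
    simp [hPdef, eval_monomial, Finsupp.prod_pow, hmo]
  have hPne : ∀ c : I → ℂ, c ≠ 0 → P c ≠ 0 := by
    intro c hc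
    obtain ⟨ν, hν⟩ : ∃ ν, c ν ≠ 0 := by
      by_contra h; push_neg at h; exact hc (funext h)
    intro hP0
    apply hν
    have := congrArg (coeff (Finsupp.equivFunOnFinite.symm ν.1)) hP0
    rw [hPdef] at this
    simp only [MvPolynomial.coeff_sum, coeff_monomial, coeff_zero] at this
    rw [Finset.sum_congr rfl (fun μ _ => ?_)] at this
    · rwa [Finset.sum_ite_eq' Finset.univ ν c, if_pos (Finset.mem_univ ν)] at this
    · have : (Finsupp.equivFunOnFinite.symm μ.1 = Finsupp.equivFunOnFinite.symm ν.1)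
          ↔ μ = ν := by
        rw [Equiv.apply_eq_iff_eq, Subtype.coe_inj]
      rw [if_congr this rfl rfl]
  have hPhom : ∀ c : I → ℂ, (P c).IsHomogeneous d := by
    intro c
    apply MvPolynomial.IsHomogeneous.sum
    intro μ _
    apply isHomogeneous_monomial
    have hμI : ∑ i, μ.1 i = d := Finset.Nat.mem_antidiagonalTuple.mp μ.2
    rw [Finsupp.degree_apply]
    rw [Finset.sum_subset (Finset.subset_univ _)
      (fun i _ hi => by simpa using Finsupp.notMem_support_iff.mp hi)]
    simpa using hμI
  have hPcont : ∀ c : I → ℂ, Continuous fun z => eval z (P c) := by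
    intro c
    have : (fun z => eval z (P c)) = fun z => ∑ μ : I, c μ * mo μ.1 z :=
      funext fun z => hevalP c z
    rw [this]
    exact continuous_finset_sum _ fun μ _ => continuous_const.mul (hmocont μ.1)
  -- key quadratic-form identity
  have hptwise : ∀ x : I → ℂ, ∀ z : Fin n → ℂ,
      eval z (P (star x)) * (starRingEnd ℂ) (eval z (P (star x)))
      = ∑ μ : I, ∑ ν : I, (starRingEnd ℂ) (x μ) * x ν
          * (mo μ.1 z * (starRingEnd ℂ) (mo ν.1 z)) := by
    intro x z
    rw [hevalP, map_sum, Finset.sum_mul_sum]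
    refine Finset.sum_congr rfl fun μ _ => Finset.sum_congr rfl fun ν _ => ?_
    simp only [Pi.star_apply, ← starRingEnd_apply, map_mul, Complex.conj_conj]
    ring
  have hquad : ∀ x : I → ℂ, ∑ μ : I, ∑ ν : I, (starRingEnd ℂ) (x μ) * x ν * M μ ν
      = ∫ z in Ω, eval z (P (star x)) * (starRingEnd ℂ) (eval z (P (star x))) := by
    intro x
    rw [show (fun z => eval z (P (star x)) * (starRingEnd ℂ) (eval z (P (star x))))
        = fun z => ∑ μ : I, ∑ ν : I, (starRingEnd ℂ) (x μ) * x ν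
            * (mo μ.1 z * (starRingEnd ℂ) (mo ν.1 z)) from funext fun z => hptwise x z]
    exact (integral_double_sum_mul hΩbdd Finset.univ Finset.univ
      (fun μ ν => (starRingEnd ℂ) (x μ) * x ν)
      (fun (μ ν : I) z => mo μ.1 z * (starRingEnd ℂ) (mo ν.1 z))
      (fun μ ν => (hmocont μ.1).mul (Complex.continuous_conj.comp (hmocont ν.1)))).symm
  -- positivity of the Gram form
  have hposform : ∀ x : I → ℂ, x ≠ 0 →
      0 < (∑ μ : I, ∑ ν : I, (starRingEnd ℂ) (x μ) * x ν * M μ ν).re := by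
    intro x hx
    rw [hquad x]
    have hsx : star x ≠ 0 := fun h0 => hx (by simpa using congrArg star h0)
    obtain ⟨z₀, hz₀, hz₀'⟩ := exists_ne_zero hΩopen hΩne (hPne _ hsx)
    exact pos_integral hΩopen hΩbdd (hPcont (star x)) hz₀ hz₀'
  -- the Gram matrix is invertible
  have hinj0 : ∀ x : I → ℂ, M.mulVec x = 0 → x = 0 := by
    intro x hx
    by_contra hxne
    have h1 := hposform x hxne
    have h2 : ∑ μ : I, ∑ ν : I, (starRingEnd ℂ) (x μ) * x ν * M μ ν
        = dotProduct (star x) (M.mulVec x) := by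
      simp only [dotProduct, Matrix.mulVec, Finset.mul_sum, Pi.star_apply,
        ← starRingEnd_apply]
      exact Finset.sum_congr rfl fun μ _ => Finset.sum_congr rfl fun ν _ => by ring
    rw [h2, hx, dotProduct_zero] at h1
    simp at h1
  have hsurj : Function.Surjective M.mulVec := by
    have hinj : Function.Injective M.mulVecLin := by
      rw [← LinearMap.ker_eq_bot, LinearMap.ker_eq_bot']
      intro x hx
      exact hinj0 x hx
    intro v
    obtain ⟨x, hx⟩ := LinearMap.injective_iff_surjective.mp hinj v
    exact ⟨x, hx⟩
  obtain ⟨y, hy⟩ := hsurj (fun μ : I => w μ.1)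
  set c : I → ℂ := star y with hcdef
  set h : MvPolynomial (Fin n) ℂ := P c with hhdef
  have hcne : c ≠ 0 := by
    intro h0
    have hy0 : y = 0 := by simpa [hcdef] using congrArg star h0
    rw [hy0, Matrix.mulVec_zero] at hy
    exact hμ₀ (congrFun hy ⟨μ₀, hμ₀I⟩).symm
  have hhcont : Continuous fun z => eval z h := hPcont c
  -- the coefficient vector of the inner products
  set a : (Fin n → ℕ) → ℂ :=
    fun μ => ∫ z in Ω, mo μ z * (starRingEnd ℂ) (eval z h) with hadef
  have ha : ∀ μ : I, a μ.1 = w μ.1 := by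
    intro μ
    have e1 : (fun z => mo μ.1 z * (starRingEnd ℂ) (eval z h))
        = fun z => ∑ ν : I, (starRingEnd ℂ) (c ν)
            * (mo μ.1 z * (starRingEnd ℂ) (mo ν.1 z)) := by
      funext z
      rw [hhdef, hevalP, map_sum, Finset.mul_sum]
      exact Finset.sum_congr rfl fun ν _ => by rw [map_mul]; ring
    have e2 : a μ.1 = ∑ ν : I, (starRingEnd ℂ) (c ν) * M μ ν := by
      show (∫ z in Ω, mo μ.1 z * (starRingEnd ℂ) (eval z h)) = _
      rw [e1]
      exact integral_sum_mul hΩbdd Finset.univ _ _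
        (fun ν => (hmocont μ.1).mul (Complex.continuous_conj.comp (hmocont ν.1)))
    rw [e2, ← congrFun hy μ]
    simp only [Matrix.mulVec, dotProduct]
    refine Finset.sum_congr rfl fun ν _ => ?_
    rw [hcdef]
    simp only [Pi.star_apply, ← starRingEnd_apply, Complex.conj_conj]
    ring
  have hb : ∀ ν, ∫ ζ in Ω, (starRingEnd ℂ) (mo ν ζ) * eval ζ h
      = (starRingEnd ℂ) (a ν) := by
    intro ν
    rw [show (fun ζ => (starRingEnd ℂ) (mo ν ζ) * eval ζ h)
        = fun ζ => (starRingEnd ℂ) (mo ν ζ * (starRingEnd ℂ) (eval ζ h)) from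
      funext fun ζ => by rw [map_mul, Complex.conj_conj]]
    rw [integral_conj]
  -- the double integral equals the matrix form in `a`
  have hfinal : (∫ z in Ω, ∫ ζ in Ω,
        (∑ μ ∈ I, ∑ ν ∈ I,
          E μ ν * (∏ i, z i ^ μ i) * (starRingEnd ℂ) (∏ i, ζ i ^ ν i))
          * eval ζ h * (starRingEnd ℂ) (eval z h))
      = ∑ μ ∈ I, ∑ ν ∈ I, E μ ν * a μ * (starRingEnd ℂ) (a ν) := by
    have hinner : ∀ z, (∫ ζ in Ω,
        (∑ μ ∈ I, ∑ ν ∈ I,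
          E μ ν * (∏ i, z i ^ μ i) * (starRingEnd ℂ) (∏ i, ζ i ^ ν i))
          * eval ζ h * (starRingEnd ℂ) (eval z h))
        = ∑ μ ∈ I, ∑ ν ∈ I,
            (E μ ν * (starRingEnd ℂ) (a ν)) * (mo μ z * (starRingEnd ℂ) (eval z h)) := by
      intro z
      rw [show (fun ζ => (∑ μ ∈ I, ∑ ν ∈ I,
            E μ ν * (∏ i, z i ^ μ i) * (starRingEnd ℂ) (∏ i, ζ i ^ ν i))
            * eval ζ h * (starRingEnd ℂ) (eval z h))
          = fun ζ => ∑ μ ∈ I, ∑ ν ∈ I,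
              (E μ ν * (mo μ z * (starRingEnd ℂ) (eval z h)))
                * ((starRingEnd ℂ) (mo ν ζ) * eval ζ h) from funext fun ζ => by
            simp only [Finset.sum_mul]
            exact Finset.sum_congr rfl fun μ _ => Finset.sum_congr rfl fun ν _ => by
              rw [hmo]; ring]
      rw [integral_double_sum_mul hΩbdd I I _
        (fun (μ ν : Fin n → ℕ) ζ => (starRingEnd ℂ) (mo ν ζ) * eval ζ h)
        (fun μ ν => (Complex.continuous_conj.comp (hmocont ν)).mul hhcont)]
      refine Finset.sum_congr rfl fun μ _ => Finset.sum_congr rfl fun ν _ => ?_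
      rw [hb ν]; ring
    rw [show (fun z => ∫ ζ in Ω,
        (∑ μ ∈ I, ∑ ν ∈ I,
          E μ ν * (∏ i, z i ^ μ i) * (starRingEnd ℂ) (∏ i, ζ i ^ ν i))
          * eval ζ h * (starRingEnd ℂ) (eval z h))
        = fun z => ∑ μ ∈ I, ∑ ν ∈ I,
            (E μ ν * (starRingEnd ℂ) (a ν)) * (mo μ z * (starRingEnd ℂ) (eval z h)) from
      funext hinner]
    rw [integral_double_sum_mul hΩbdd I I _
      (fun (μ ν : Fin n → ℕ) z => mo μ z * (starRingEnd ℂ) (eval z h))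
      (fun μ ν => (hmocont μ).mul (Complex.continuous_conj.comp hhcont))]
    refine Finset.sum_congr rfl fun μ _ => Finset.sum_congr rfl fun ν _ => ?_
    rw [show (∫ z in Ω, mo μ z * (starRingEnd ℂ) (eval z h)) = a μ from rfl]
    ring
  have hp := hPos h (hPhom c) (hPne c hcne)
  rw [hfinal] at hp
  have hsum : ∑ μ ∈ I, ∑ ν ∈ I, E μ ν * a μ * (starRingEnd ℂ) (a ν)
      = ∑ μ ∈ I, ∑ ν ∈ I, E μ ν * w μ * (starRingEnd ℂ) (w ν) :=
    Finset.sum_congr rfl fun μ hμ => Finset.sum_congr rfl fun ν hν => by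
      rw [ha ⟨μ, hμ⟩, ha ⟨ν, hν⟩]
  rw [hsum] at hp
  exact hp
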